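/- Let n be an integer with 9 ≤ n ≤ 11, let b satisfy 0 < b ≤ 1/(2n+2), and set a = b(2+(n-2)b)²/(2(2+(n-3)b)) and γ = b/(2+(n-3)b). Define f(x,y) = (2b + (n-2)b² - 2a)·xy + 2a·(x+2)(y+2) + b²·(x² + y²). Then f(x,y) ≥ 0 for all real x, y with x ≥ -2γ-2 and y ≥ -2γ-2. -/

import Mathlib

/-- for `9 ≤ n ≤ 11`, `0 < b ≤ 1/(2n+2)`,
`a = b(2+(n-2)b)²/(2(2+(n-3)b))` and `γ = b/(2+(n-3)b)`, the function
`f(x,y) = (2b+(n-2)b²-2a)xy + 2a(x+2)(y+2) + b²(x²+y²)` is nonnegative on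
`{(x,y) : x ≥ -2γ-2, y ≥ -2γ-2}`. -/
theorem stmt_15 (n : ℕ) (hn9 : 9 ≤ n) (hn11 : n ≤ 11) (b : ℝ)
    (hb0 : 0 < b) (hb : b ≤ 1 / (2 * (n : ℝ) + 2))
    (a γ : ℝ)
    (ha : a = b * (2 + ((n : ℝ) - 2) * b) ^ 2 / (2 * (2 + ((n : ℝ) - 3) * b)))
    (hγ : γ = b / (2 + ((n : ℝ) - 3) * b))
    (x y : ℝ) (hx : x ≥ -2 * γ - 2) (hy : y ≥ -2 * γ - 2) :
    (2 * b + ((n : ℝ) - 2) * b ^ 2 - 2 * a) * (x * y) +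
        2 * a * ((x + 2) * (y + 2)) + b ^ 2 * (x ^ 2 + y ^ 2) ≥ 0 := by
  have hn9' : (9:ℝ) ≤ (n:ℝ) := by exact_mod_cast hn9
  have hD : (0:ℝ) < 2 + ((n : ℝ) - 3) * b := by nlinarith
  have hγ0 : 0 < γ := by rw [hγ]; positivity
  have hγ1 : γ < 1 := by
    rw [hγ, div_lt_one hD]
    nlinarith
  have key : (2 * b + ((n : ℝ) - 2) * b ^ 2 - 2 * a) * (x * y) +
        2 * a * ((x + 2) * (y + 2)) + b ^ 2 * (x ^ 2 + y ^ 2)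
      = b * (2 + ((n : ℝ) - 3) * b) *
        ((1 - γ) * (x + 2 + 2 * γ) * (y + 2 + 2 * γ)
          + γ * (x + y + 2 + 2 * γ) ^ 2) := by
    rw [ha, hγ]
    field_simp [show (2 + b * ((n:ℝ) - 3)) ≠ 0 by linarith]
    ring
  rw [ge_iff_le, key]
  have hx' : 0 ≤ x + 2 + 2 * γ := by linarith
  have hy' : 0 ≤ y + 2 + 2 * γ := by linarith
  have h1 : 0 ≤ (1 - γ) * (x + 2 + 2 * γ) * (y + 2 + 2 * γ) :=
    mul_nonneg (mul_nonneg (by linarith) hx') hy'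
  have h2 : 0 ≤ γ * (x + y + 2 + 2 * γ) ^ 2 :=
    mul_nonneg hγ0.le (sq_nonneg _)
  have hbD : 0 ≤ b * (2 + ((n : ℝ) - 3) * b) := mul_nonneg hb0.le hD.le
  nlinarith [mul_nonneg hbD (add_nonneg h1 h2)]
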